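/- Let K be a field of characteristic 0, V = {1,…,n}, S = K[x₁,…,xₙ], and let Δ be a simplicial complex on V that is a T-space, with Stanley–Reisner ideal I_Δ ⊆ S. For vectors a = (a₁,…,aₙ) and t = (t₁,…,tₙ) in ℕⁿ, let δ_{a,t} : S → S be the K-linear operator δ_{a,t}(p) = x₁^{a₁}⋯xₙ^{aₙ} · (∏_i 1/t_i!) · (∂^{t₁}/∂x₁^{t₁}) ⋯ (∂^{tₙ}/∂xₙ^{tₙ})(p), where ∂/∂x_i denotes the i-th partial derivative on S. Then δ_{a,t}(I_Δ) ⊆ I_Δ if and only if either the monomial x₁^{a₁}⋯xₙ^{aₙ} lies in I_Δ, or supp(t) ⊆ supp(a), where supp(c) = { i : c_i ≠ 0 }. -/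

import Mathlib

open MvPolynomial

/-- A simplicial complex on the vertex set `Fin n`: a collection of finite subsets
(faces) closed under taking subsets and containing every singleton. -/
def IsSimplicialComplex (n : ℕ) (Δ : Set (Finset (Fin n))) : Prop :=
  (∀ F ∈ Δ, ∀ G ⊆ F, G ∈ Δ) ∧ ∀ i : Fin n, ({i} : Finset (Fin n)) ∈ Δ

/-- A facet is a face maximal under inclusion. -/
def IsFacet {n : ℕ} (Δ : Set (Finset (Fin n))) (F : Finset (Fin n)) : Prop :=
  F ∈ Δ ∧ ∀ G ∈ Δ, F ⊆ G → G = F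

/-- `Δ` is a T-space: any face `F` can be separated from any face `G ⊄ F` by a facet. -/
def IsTSpace {n : ℕ} (Δ : Set (Finset (Fin n))) : Prop :=
  ∀ F ∈ Δ, ∀ G ∈ Δ, ¬ G ⊆ F → ∃ H : Finset (Fin n), IsFacet Δ H ∧ F ⊆ H ∧ ¬ G ⊆ H

/-- The Stanley–Reisner (face) ideal of `Δ` over `K`. -/
noncomputable def stanleyReisnerIdeal (K : Type) [Field K] (n : ℕ) (Δ : Set (Finset (Fin n))) :
    Ideal (MvPolynomial (Fin n) K) :=
  Ideal.span { p | ∃ F : Finset (Fin n), F ∉ Δ ∧ p = ∏ i ∈ F, X i }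

/-- The iterated partial derivative `(∂/∂x₁)^{t₁} ⋯ (∂/∂xₙ)^{tₙ}`. -/
noncomputable def iterPDeriv {K : Type} [CommSemiring K] {n : ℕ} (t : Fin n → ℕ)
    (p : MvPolynomial (Fin n) K) : MvPolynomial (Fin n) K :=
  (List.finRange n).foldr (fun i q => (pderiv i)^[t i] q) p

/-- The divided-power differential operator
`δ_{a,t} = x₁^{a₁}⋯xₙ^{aₙ} · (∏ᵢ 1/tᵢ!) · (∂/∂x₁)^{t₁}⋯(∂/∂xₙ)^{tₙ}`. -/
noncomputable def dividedPowerOp (K : Type) [Field K] {n : ℕ} (a t : Fin n → ℕ)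
    (p : MvPolynomial (Fin n) K) : MvPolynomial (Fin n) K :=
  C (((∏ i : Fin n, Nat.factorial (t i) : ℕ) : K))⁻¹ * (∏ i : Fin n, X i ^ a i) *
    iterPDeriv t p

namespace SRaux

variable {K : Type} [Field K] {n : ℕ}

noncomputable def ind (F : Finset (Fin n)) : Fin n →₀ ℕ := ∑ i ∈ F, Finsupp.single i 1

lemma ind_apply (F : Finset (Fin n)) (i : Fin n) : ind F i = if i ∈ F then 1 else 0 := by
  classical
  simp [ind, Finsupp.finset_sum_apply, Finsupp.single_apply]

lemma ind_support (F : Finset (Fin n)) : (ind F).support = F := by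
  ext i
  simp [Finsupp.mem_support_iff, ind_apply]

lemma prod_X_ind (F : Finset (Fin n)) :
    (∏ i ∈ F, X i : MvPolynomial (Fin n) K) = monomial (ind F) 1 := by
  rw [← prod_X_pow_eq_monomial, ind_support]
  exact Finset.prod_congr rfl fun i hi => by simp [ind_apply, hi]

lemma SR_eq (Δ : Set (Finset (Fin n))) :
    stanleyReisnerIdeal K n Δ =
      Ideal.span ((fun s => monomial s (1 : K)) ''
        { m : Fin n →₀ ℕ | ∃ F : Finset (Fin n), F ∉ Δ ∧ m = ind F }) := by
  unfold stanleyReisnerIdeal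
  congr 1
  ext p
  constructor
  · rintro ⟨F, hF, rfl⟩
    exact ⟨ind F, ⟨F, hF, rfl⟩, (prod_X_ind F).symm⟩
  · rintro ⟨m, ⟨F, hF, rfl⟩, rfl⟩
    exact ⟨F, hF, (prod_X_ind F).symm⟩

lemma mem_SR_iff {Δ : Set (Finset (Fin n))} (hdc : ∀ F ∈ Δ, ∀ G ⊆ F, G ∈ Δ)
    (p : MvPolynomial (Fin n) K) :
    p ∈ stanleyReisnerIdeal K n Δ ↔ ∀ m ∈ p.support, (m.support : Finset (Fin n)) ∉ Δ := by
  rw [SR_eq, mem_ideal_span_monomial_image]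
  refine forall₂_congr fun m hm => ?_
  constructor
  · rintro ⟨s, ⟨F, hF, rfl⟩, hle⟩ hmem
    refine hF (hdc _ hmem F fun i hi => ?_)
    have h1 : (1 : ℕ) ≤ m i := by
      have := hle i
      rwa [ind_apply, if_pos hi] at this
    simp only [Finsupp.mem_support_iff]; omega
  · intro h
    refine ⟨ind m.support, ⟨m.support, h, rfl⟩, fun i => ?_⟩
    rw [ind_apply]
    split
    · next hi => exact Nat.one_le_iff_ne_zero.mpr (Finsupp.mem_support_iff.mp hi)
    · exact Nat.zero_le _

lemma monomial_mem_SR_iff {Δ : Set (Finset (Fin n))} (hdc : ∀ F ∈ Δ, ∀ G ⊆ F, G ∈ Δ)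
    (m : Fin n →₀ ℕ) (c : K) :
    monomial m c ∈ stanleyReisnerIdeal K n Δ ↔ c = 0 ∨ m.support ∉ Δ := by
  rw [mem_SR_iff hdc]
  rcases eq_or_ne c 0 with rfl | hc
  · simp
  · simp [support_monomial, hc]

lemma nat_desc_aux (x k : ℕ) : x * (x - 1).descFactorial k = x.descFactorial (k + 1) := by
  cases x with
  | zero => simp
  | succ x => rw [Nat.succ_sub_one, Nat.succ_descFactorial_succ]

lemma pderiv_iterate_monomial (i : Fin n) (k : ℕ) (m : Fin n →₀ ℕ) (c : K) :
    (pderiv i)^[k] (monomial m c) =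
      monomial (m - Finsupp.single i k) (c * (m i).descFactorial k) := by
  induction k generalizing m c with
  | zero => simp
  | succ k ih =>
    rw [Function.iterate_succ_apply, pderiv_monomial, ih]
    have hidx : m - Finsupp.single i 1 - Finsupp.single i k = m - Finsupp.single i (k + 1) := by
      rw [tsub_tsub, ← Finsupp.single_add, add_comm]
    have happ : (m - Finsupp.single i 1 : Fin n →₀ ℕ) i = m i - 1 := by
      rw [Finsupp.tsub_apply, Finsupp.single_eq_same]
    rw [hidx, happ, mul_assoc]
    congr 2
    exact_mod_cast congrArg (Nat.cast : ℕ → K) (nat_desc_aux (m i) k)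

lemma sum_single_apply_ne (t : Fin n → ℕ) (l : List (Fin n)) (i : Fin n) (hi : i ∉ l) :
    ((l.map fun j => Finsupp.single j (t j)).sum) i = 0 := by
  induction l with
  | nil => simp
  | cons j l ih =>
    have hij : i ≠ j := fun h => hi (h ▸ List.mem_cons_self (a := j) (l := l))
    simp only [List.map_cons, List.sum_cons, Finsupp.add_apply]
    rw [Finsupp.single_eq_of_ne' (Ne.symm hij), ih (fun h => hi (List.mem_cons_of_mem _ h))]

lemma foldr_pderiv_monomial (t : Fin n → ℕ) (l : List (Fin n)) (hl : l.Nodup)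
    (m : Fin n →₀ ℕ) (c : K) :
    l.foldr (fun i q => (pderiv i)^[t i] q) (monomial m c) =
      monomial (m - (l.map fun i => Finsupp.single i (t i)).sum)
        (c * ((l.map fun i => ((m i).descFactorial (t i) : K)).prod)) := by
  induction l with
  | nil => simp
  | cons i l ih =>
    have hnd := List.nodup_cons.mp hl
    rw [List.foldr_cons, ih hnd.2, pderiv_iterate_monomial]
    have h1 : (m - (l.map fun j => Finsupp.single j (t j)).sum) i = m i := by
      rw [Finsupp.tsub_apply, sum_single_apply_ne t l i hnd.1, Nat.sub_zero]
    rw [h1]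
    congr 1
    · rw [tsub_tsub, List.map_cons, List.sum_cons, add_comm]
    · rw [List.map_cons, List.prod_cons]
      ring

lemma iterPDeriv_monomial (t : Fin n → ℕ) (m : Fin n →₀ ℕ) (c : K) :
    iterPDeriv t (monomial m c) =
      monomial (m - Finsupp.equivFunOnFinite.symm t)
        (c * ∏ i : Fin n, ((m i).descFactorial (t i) : K)) := by
  rw [iterPDeriv, foldr_pderiv_monomial t _ (List.nodup_finRange n),
    Finsupp.equivFunOnFinite_symm_eq_sum, Fin.sum_univ_def, Fin.prod_univ_def]

lemma pderiv_iterate_add (i : Fin n) (k : ℕ) (p q : MvPolynomial (Fin n) K) :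
    (pderiv i)^[k] (p + q) = (pderiv i)^[k] p + (pderiv i)^[k] q := by
  induction k generalizing p q with
  | zero => rfl
  | succ k ih => rw [Function.iterate_succ_apply, Function.iterate_succ_apply,
      Function.iterate_succ_apply, map_add, ih]

lemma pderiv_iterate_zero (i : Fin n) (k : ℕ) :
    (pderiv i)^[k] (0 : MvPolynomial (Fin n) K) = 0 := by
  induction k with
  | zero => rfl
  | succ k ih => rw [Function.iterate_succ_apply, map_zero, ih]

lemma iterPDeriv_add (t : Fin n → ℕ) (p q : MvPolynomial (Fin n) K) :
    iterPDeriv t (p + q) = iterPDeriv t p + iterPDeriv t q := by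
  unfold iterPDeriv
  induction List.finRange n with
  | nil => rfl
  | cons i l ih => rw [List.foldr_cons, List.foldr_cons, List.foldr_cons, ih,
      pderiv_iterate_add]

lemma iterPDeriv_zero (t : Fin n → ℕ) :
    iterPDeriv t (0 : MvPolynomial (Fin n) K) = 0 := by
  unfold iterPDeriv
  induction List.finRange n with
  | nil => rfl
  | cons i l ih => rw [List.foldr_cons, ih, pderiv_iterate_zero]

lemma dividedPowerOp_sum {α : Type*} (a t : Fin n → ℕ) (s : Finset α)
    (f : α → MvPolynomial (Fin n) K) :
    dividedPowerOp K a t (∑ x ∈ s, f x) = ∑ x ∈ s, dividedPowerOp K a t (f x) := by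
  classical
  induction s using Finset.induction with
  | empty => simp [dividedPowerOp, iterPDeriv_zero]
  | @insert _ _ hx ih =>
      rw [Finset.sum_insert hx, Finset.sum_insert hx, ← ih]
      unfold dividedPowerOp
      rw [iterPDeriv_add, mul_add]

lemma prod_X_pow_univ (a : Fin n → ℕ) :
    (∏ i : Fin n, (X i : MvPolynomial (Fin n) K) ^ a i) =
      monomial (Finsupp.equivFunOnFinite.symm a) 1 := by
  rw [← prod_X_pow_eq_monomial]
  refine (Finset.prod_subset (Finset.subset_univ _) fun i _ hi => ?_).symm.trans
    (Finset.prod_congr rfl fun i _ => by rfl)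
  have h0 : a i = 0 := Finsupp.notMem_support_iff.mp hi
  rw [h0, pow_zero]

lemma dividedPowerOp_monomial [CharZero K] (a t : Fin n → ℕ) (m : Fin n →₀ ℕ) (c : K) :
    dividedPowerOp K a t (monomial m c) =
      monomial (Finsupp.equivFunOnFinite.symm a + (m - Finsupp.equivFunOnFinite.symm t))
        (c * ∏ i : Fin n, ((m i).choose (t i) : K)) := by
  rw [dividedPowerOp, iterPDeriv_monomial, prod_X_pow_univ, C_mul_monomial,
    monomial_mul]
  congr 1
  have hf : ((∏ i : Fin n, Nat.factorial (t i) : ℕ) : K) ≠ 0 := by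
    rw [Nat.cast_ne_zero]
    exact Finset.prod_ne_zero_iff.mpr fun i _ => (Nat.factorial_pos _).ne'
  have hdesc : ∀ i : Fin n, ((m i).descFactorial (t i) : K) =
      (Nat.factorial (t i) : K) * ((m i).choose (t i) : K) := by
    intro i
    rw [← Nat.cast_mul, Nat.descFactorial_eq_factorial_mul_choose]
  rw [Finset.prod_congr rfl fun i _ => hdesc i, Finset.prod_mul_distrib]
  rw [← Nat.cast_prod]
  have hf' := hf
  rw [Nat.cast_prod] at hf'
  field_simp

end SRaux

/-- (Traves) For a T-space, the operator `δ_{a,t}` preserves the Stanley–Reisner ideal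
iff the monomial `x^a` lies in the ideal or `supp t ⊆ supp a`. -/
theorem dividedPowerOp_mem_idealizer_iff (K : Type) [Field K] [CharZero K] (n : ℕ)
    (Δ : Set (Finset (Fin n))) (hΔ : IsSimplicialComplex n Δ) (hT : IsTSpace Δ)
    (a t : Fin n → ℕ) :
    (∀ p ∈ stanleyReisnerIdeal K n Δ, dividedPowerOp K a t p ∈ stanleyReisnerIdeal K n Δ) ↔
      ((∏ i : Fin n, (X i : MvPolynomial (Fin n) K) ^ a i) ∈ stanleyReisnerIdeal K n Δ ∨
        { i : Fin n | t i ≠ 0 } ⊆ { i : Fin n | a i ≠ 0 }) := by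
  classical
  obtain ⟨hdc, hsing⟩ := hΔ
  set A : Fin n →₀ ℕ := Finsupp.equivFunOnFinite.symm a with hA
  set T : Fin n →₀ ℕ := Finsupp.equivFunOnFinite.symm t with hTdef
  have hAapp : ∀ i, A i = a i := fun i => rfl
  have hTapp : ∀ i, T i = t i := fun i => rfl
  constructor
  · intro h
    by_contra hc
    push_neg at hc
    obtain ⟨hxa, hts⟩ := hc
    rw [SRaux.prod_X_pow_univ, SRaux.monomial_mem_SR_iff hdc] at hxa
    push_neg at hxa
    obtain ⟨-, hAΔ⟩ := hxa
    rw [Set.not_subset] at hts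
    obtain ⟨j, htj, haj⟩ := hts
    simp only [Set.mem_setOf_eq, not_not] at htj haj
    have hjF : j ∉ A.support := by
      rw [Finsupp.mem_support_iff, hAapp j, haj]
      exact fun h => h rfl
    obtain ⟨H, ⟨hHΔ, hHmax⟩, hFH, hjH'⟩ :=
      hT A.support hAΔ {j} (hsing j) (by simp [hjF])
    have hjH : j ∉ H := by simpa using hjH'
    set m : Fin n →₀ ℕ := T + SRaux.ind H with hm
    have hmapp : ∀ i, m i = t i + (if i ∈ H then 1 else 0) := by
      intro i
      rw [hm, Finsupp.add_apply, SRaux.ind_apply, hTapp]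
    have hins : insert j H ∉ Δ := fun hmem =>
      hjH (hHmax (insert j H) hmem (Finset.subset_insert j H) ▸ Finset.mem_insert_self j H)
    have hmsupp : (insert j H : Finset (Fin n)) ⊆ m.support := by
      intro i hi
      rw [Finsupp.mem_support_iff, hmapp]
      rcases Finset.mem_insert.mp hi with rfl | hiH
      · split <;> omega
      · rw [if_pos hiH]; omega
    have hpI : (monomial m 1 : MvPolynomial (Fin n) K) ∈ stanleyReisnerIdeal K n Δ := by
      rw [SRaux.monomial_mem_SR_iff hdc]
      right
      exact fun hΔm => hins (hdc _ hΔm _ hmsupp)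
    have hmem := h _ hpI
    rw [SRaux.dividedPowerOp_monomial] at hmem
    have hsub : m - T = SRaux.ind H := by rw [hm, add_tsub_cancel_left]
    rw [hsub, SRaux.monomial_mem_SR_iff hdc] at hmem
    rcases hmem with h0 | hns
    · rw [one_mul] at h0
      refine (Finset.prod_ne_zero_iff.mpr fun i _ => ?_) h0
      rw [Nat.cast_ne_zero]
      refine (Nat.choose_pos ?_).ne'
      rw [hmapp i]
      exact Nat.le_add_right _ _
    · have hsuppAH : (A + SRaux.ind H).support = H := by
        ext i
        rw [Finsupp.mem_support_iff, Finsupp.add_apply, SRaux.ind_apply]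
        constructor
        · intro hne
          by_cases hiH : i ∈ H
          · exact hiH
          · rw [if_neg hiH, add_zero] at hne
            exact hFH (Finsupp.mem_support_iff.mpr hne)
        · intro hiH
          rw [if_pos hiH]
          omega
      exact hns (by rw [hsuppAH]; exact hHΔ)
  · intro hcase p hp
    rw [SRaux.mem_SR_iff hdc] at hp
    have hsplit : dividedPowerOp K a t p =
        ∑ v ∈ p.support, dividedPowerOp K a t (monomial v (coeff v p)) := by
      conv_lhs => rw [p.as_sum]
      exact SRaux.dividedPowerOp_sum a t p.support _
    rw [hsplit]
    refine Ideal.sum_mem _ fun v hv => ?_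
    rw [SRaux.dividedPowerOp_monomial, SRaux.monomial_mem_SR_iff hdc]
    rcases hcase with hxa | hts
    · right
      rw [SRaux.prod_X_pow_univ, SRaux.monomial_mem_SR_iff hdc] at hxa
      have hAΔ' : A.support ∉ Δ := by
        rcases hxa with h | h
        · exact absurd h one_ne_zero
        · exact h
      intro hmem
      refine hAΔ' (hdc _ hmem _ fun i hi => ?_)
      rw [Finsupp.mem_support_iff] at hi ⊢
      rw [Finsupp.add_apply]
      intro hzero
      exact hi (Nat.add_eq_zero.mp hzero).1
    · by_cases h0 : coeff v p * ∏ i : Fin n, ((v i).choose (t i) : K) = 0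
      · left; exact h0
      · right
        have hprod : ∀ i : Fin n, ((v i).choose (t i) : K) ≠ 0 := fun i hzero =>
          h0 (by rw [Finset.prod_eq_zero (Finset.mem_univ i) hzero, mul_zero])
        have hle : ∀ i, t i ≤ v i := by
          intro i
          by_contra hlt
          refine hprod i ?_
          rw [Nat.choose_eq_zero_of_lt (by omega), Nat.cast_zero]
        intro hmem
        refine hp v hv (hdc _ hmem _ fun i hi => ?_)
        rw [Finsupp.mem_support_iff] at hi ⊢
        rw [Finsupp.add_apply, Finsupp.tsub_apply, hAapp, hTapp]
        have hta : t i ≠ 0 → a i ≠ 0 := fun h => hts h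
        have := hle i
        omega
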